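/- arXiv:2308.15415 — 4 statements merged into one kernel-verified Lean document; each statement's English description precedes it below -/
import Mathlib

section
/- For every integer m ≥ 2, R(F_m − 1) = 1, i.e., F_m − 1 has exactly one representation as a sum of distinct Fibonacci numbers. -/
/-- Number of representations of `n` as a sum of distinct Fibonacci numbers. -/
noncomputable def R (n : ℕ) : ℕ :=
  Nat.card {s : Finset ℕ // (∀ x ∈ s, 0 < x ∧ ∃ m, Nat.fib m = x) ∧ ∑ x ∈ s, x = n}

noncomputable def A (H : ℕ) : ℕ := ∑ n ∈ Finset.range (H + 1), R n

noncomputable def V (H : ℕ) : ℕ := ∑ n ∈ Finset.range (H + 1), (R n) ^ 2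

open Nat Finset

private lemma fib_lt_fib {a b : ℕ} (ha : 2 ≤ a) (hab : a < b) :
    Nat.fib a < Nat.fib b :=
  lt_of_lt_of_le (Nat.fib_lt_fib_succ ha) (Nat.fib_mono hab)

private lemma two_le_fib {k : ℕ} (hk : 3 ≤ k) : 2 ≤ Nat.fib k := by
  calc 2 = Nat.fib 3 := rfl
  _ ≤ Nat.fib k := Nat.fib_mono hk

private lemma fib_max2 {j x : ℕ} (h : Nat.fib j = x) (hx : 0 < x) :
    Nat.fib (max j 2) = x := by
  rcases Nat.lt_or_ge j 2 with hj | hj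
  · interval_cases j
    · rw [Nat.fib_zero] at h; omega
    · have : max 1 2 = 2 := rfl
      rw [this, Nat.fib_two, ← h, Nat.fib_one]
  · rwa [max_eq_left hj]

private lemma sum_fib_Icc (k : ℕ) :
    ∑ i ∈ Finset.Icc 2 (k + 1), Nat.fib i = Nat.fib (k + 3) - 2 := by
  induction k with
  | zero => simp; decide
  | succ n ih =>
    rw [show n + 1 + 1 = n + 2 from rfl, Finset.sum_Icc_succ_top (by omega), ih]
    have h2 : 2 ≤ Nat.fib (n + 3) := two_le_fib (by omega)
    have e2 : Nat.fib (n + 1 + 1) = Nat.fib (n + 2) := rfl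
    have hadd : Nat.fib (n + 1 + 3) = Nat.fib (n + 2) + Nat.fib (n + 3) := by
      have h := @Nat.fib_add_two (n + 2)
      exact h
    omega

/-- the sum of distinct Fibonacci values all `< fib k` is at most `fib (k+1) - 2`. -/
private lemma sum_bound {k : ℕ} (hk : 2 ≤ k) (s : Finset ℕ)
    (h1 : ∀ x ∈ s, 0 < x ∧ ∃ j, Nat.fib j = x)
    (h2 : ∀ x ∈ s, x < Nat.fib k) :
    ∑ x ∈ s, x ≤ Nat.fib (k + 1) - 2 := by
  have hsub : s ⊆ (Finset.Icc 2 (k - 1)).image Nat.fib := by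
    intro x hx
    obtain ⟨hx0, j, hj⟩ := h1 x hx
    have hxlt := h2 x hx
    refine Finset.mem_image.2 ⟨max j 2, ?_, ?_⟩
    · have hfib : Nat.fib (max j 2) = x := fib_max2 hj hx0
      have : max j 2 < k := by
        by_contra hcon
        push_neg at hcon
        have := Nat.fib_mono hcon
        omega
      exact Finset.mem_Icc.2 ⟨le_max_right _ _, by omega⟩
    · exact fib_max2 hj hx0
  calc ∑ x ∈ s, x ≤ ∑ x ∈ (Finset.Icc 2 (k - 1)).image Nat.fib, x :=
        Finset.sum_le_sum_of_subset hsub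
    _ = ∑ i ∈ Finset.Icc 2 (k - 1), Nat.fib i := by
        refine Finset.sum_image ?_
        intro a ha b hb hab
        simp only [Finset.mem_coe, Finset.mem_Icc] at ha hb
        by_contra hne
        rcases Nat.lt_or_ge a b with h | h
        · exact absurd hab (Nat.ne_of_lt (fib_lt_fib ha.1 h))
        · have : b < a := by omega
          exact absurd hab.symm (Nat.ne_of_lt (fib_lt_fib hb.1 this))
    _ ≤ Nat.fib (k + 1) - 2 := by
        rcases Nat.exists_eq_add_of_le hk with ⟨t, rfl⟩
        rcases t with _ | t
        · simp
        · have : 2 + (t + 1) - 1 = t + 2 := by omega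
          rw [this]
          rw [show t + 2 = (t + 1) + 1 from rfl, sum_fib_Icc]
          have : t + 1 + 3 = 2 + (t + 1) + 1 := by omega
          rw [this]

/-- Key step: any representation of `fib m - 1` (for `m ≥ 4`) contains `fib (m-1)`,
and removing it yields a representation of `fib (m-2) - 1`. -/
private lemma step {m : ℕ} (hm : 4 ≤ m) (s : Finset ℕ)
    (h1 : ∀ x ∈ s, 0 < x ∧ ∃ j, Nat.fib j = x)
    (h2 : ∑ x ∈ s, x = Nat.fib m - 1) :
    Nat.fib (m - 1) ∈ s ∧ ∑ x ∈ s.erase (Nat.fib (m - 1)), x = Nat.fib (m - 2) - 1 := by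
  have hfm2 : 2 ≤ Nat.fib m := two_le_fib (by omega)
  have hne : s.Nonempty := by
    rcases Finset.eq_empty_or_nonempty s with rfl | h
    · simp at h2; omega
    · exact h
  -- the maximum element is fib (m-1)
  obtain ⟨M, hMmem, hMmax⟩ := Finset.exists_max_image s id hne
  have hMub : ∀ x ∈ s, x ≤ M := hMmax
  have hMle : M ≤ Nat.fib m - 1 := h2 ▸ Finset.single_le_sum (fun i _ => Nat.zero_le i) hMmem
  have hMge : Nat.fib (m - 1) ≤ M := by
    by_contra hcon
    push_neg at hcon
    have hb : ∑ x ∈ s, x ≤ Nat.fib (m - 1 + 1) - 2 := by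
      refine sum_bound (by omega) s h1 (fun x hx => lt_of_le_of_lt (hMub x hx) hcon)
    have : m - 1 + 1 = m := by omega
    rw [this] at hb
    omega
  obtain ⟨_, j, hj⟩ := h1 M hMmem
  have hM0 : 0 < M := (h1 M hMmem).1
  have hjk : Nat.fib (max j 2) = M := fib_max2 hj hM0
  have hjlt : max j 2 < m := by
    by_contra hcon
    push_neg at hcon
    have := Nat.fib_mono hcon
    omega
  have hMeq : M = Nat.fib (m - 1) := by
    have h1' : Nat.fib (max j 2) ≤ Nat.fib (m - 1) := Nat.fib_mono (by omega)
    omega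
  subst hMeq
  refine ⟨hMmem, ?_⟩
  have hsum : ∑ x ∈ s.erase (Nat.fib (m - 1)), x = ∑ x ∈ s, x - Nat.fib (m - 1) := by
    rw [← Finset.sum_erase_add s _ hMmem]; omega
  have hadd : Nat.fib (m - 2) + Nat.fib (m - 1) = Nat.fib m := by
    have := @Nat.fib_add_two (m - 2)
    have e1 : m - 2 + 2 = m := by omega
    have e2 : m - 2 + 1 = m - 1 := by omega
    rw [e1, e2] at this
    omega
  have hf2pos : 0 < Nat.fib (m - 2) := Nat.fib_pos.2 (by omega)
  rw [hsum, h2]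
  omega

private lemma sum_eq_one {s : Finset ℕ} (h1 : ∀ x ∈ s, 0 < x)
    (h2 : ∑ x ∈ s, x = 1) : s = {1} := by
  have hne : s.Nonempty := by
    rcases Finset.eq_empty_or_nonempty s with rfl | h
    · simp at h2
    · exact h
  obtain ⟨a, ha⟩ := hne
  have has : a ≤ 1 := h2 ▸ Finset.single_le_sum (fun i _ => Nat.zero_le i) ha
  have ha1 : a = 1 := by have := h1 a ha; omega
  subst ha1
  have : ∑ x ∈ s.erase 1, x = 0 := by
    rw [← Finset.sum_erase_add s _ ha] at h2; omega
  have herase : s.erase 1 = ∅ := by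
    rcases Finset.eq_empty_or_nonempty (s.erase 1) with h | ⟨b, hb⟩
    · exact h
    · have hbpos := h1 b (Finset.mem_of_mem_erase hb)
      have : b ≤ 0 := this ▸ Finset.single_le_sum (fun i _ => Nat.zero_le i) hb
      omega
  have := Finset.insert_erase ha
  rw [herase] at this
  simpa using this.symm

/-- Uniqueness: any two representations of `fib m - 1` coincide. -/
private lemma uniq : ∀ m, 2 ≤ m → ∀ s t : Finset ℕ,
    (∀ x ∈ s, 0 < x ∧ ∃ j, Nat.fib j = x) → ∑ x ∈ s, x = Nat.fib m - 1 →
    (∀ x ∈ t, 0 < x ∧ ∃ j, Nat.fib j = x) → ∑ x ∈ t, x = Nat.fib m - 1 →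
    s = t := by
  intro m
  induction m using Nat.strong_induction_on with
  | _ m ih =>
    intro hm s t hs1 hs2 ht1 ht2
    rcases Nat.lt_or_ge m 4 with hlt | hge
    · interval_cases m
      · -- fib 2 - 1 = 0
        have hf2 : Nat.fib 2 = 1 := rfl
        have hs2' : ∑ x ∈ s, x = 0 := by omega
        have ht2' : ∑ x ∈ t, x = 0 := by omega
        have hs : s = ∅ := by
          rcases Finset.eq_empty_or_nonempty s with h | ⟨a, ha⟩
          · exact h
          · have := (hs1 a ha).1
            have : a ≤ 0 := hs2' ▸ Finset.single_le_sum (fun i _ => Nat.zero_le i) ha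
            omega
        have ht : t = ∅ := by
          rcases Finset.eq_empty_or_nonempty t with h | ⟨a, ha⟩
          · exact h
          · have := (ht1 a ha).1
            have : a ≤ 0 := ht2' ▸ Finset.single_le_sum (fun i _ => Nat.zero_le i) ha
            omega
        rw [hs, ht]
      · -- fib 3 - 1 = 1
        have h3 : Nat.fib 3 - 1 = 1 := by decide
        rw [h3] at hs2 ht2
        rw [sum_eq_one (fun x hx => (hs1 x hx).1) hs2,
          sum_eq_one (fun x hx => (ht1 x hx).1) ht2]
    · obtain ⟨hsm, hss⟩ := step hge s hs1 hs2
      obtain ⟨htm, hts⟩ := step hge t ht1 ht2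
      have heq : s.erase (Nat.fib (m - 1)) = t.erase (Nat.fib (m - 1)) := by
        refine ih (m - 2) (by omega) (by omega) _ _
          (fun x hx => hs1 x (Finset.mem_of_mem_erase hx)) hss
          (fun x hx => ht1 x (Finset.mem_of_mem_erase hx)) hts
      have h1 := Finset.insert_erase hsm
      have h2 := Finset.insert_erase htm
      rw [← h1, ← h2, heq]

/-- Existence of a representation, all of whose elements are at most `fib (m-1)`. -/
private lemma exist : ∀ m, 2 ≤ m → ∃ s : Finset ℕ,
    (∀ x ∈ s, 0 < x ∧ ∃ j, Nat.fib j = x) ∧ (∀ x ∈ s, x ≤ Nat.fib (m - 1)) ∧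
    ∑ x ∈ s, x = Nat.fib m - 1 := by
  intro m
  induction m using Nat.strong_induction_on with
  | _ m ih =>
    intro hm
    rcases Nat.lt_or_ge m 4 with hlt | hge
    · interval_cases m
      · exact ⟨∅, by simp⟩
      · refine ⟨{1}, ?_, ?_, ?_⟩
        · intro x hx
          simp only [Finset.mem_singleton] at hx
          exact ⟨by omega, 1, by simp [hx]⟩
        · intro x hx
          simp only [Finset.mem_singleton] at hx
          simp [hx]
        · simp; decide
    · obtain ⟨s, hs1, hs2, hs3⟩ := ih (m - 2) (by omega) (by omega)
      have hlt' : Nat.fib (m - 2 - 1) < Nat.fib (m - 1) := by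
        calc Nat.fib (m - 2 - 1) ≤ Nat.fib (m - 2) := Nat.fib_mono (by omega)
        _ < Nat.fib (m - 2 + 1) := Nat.fib_lt_fib_succ (by omega)
        _ = Nat.fib (m - 1) := by rw [show m - 2 + 1 = m - 1 from by omega]
      have hnotmem : Nat.fib (m - 1) ∉ s := fun h => by
        have := hs2 _ h; omega
      refine ⟨insert (Nat.fib (m - 1)) s, ?_, ?_, ?_⟩
      · intro x hx
        rcases Finset.mem_insert.1 hx with rfl | hx'
        · exact ⟨Nat.fib_pos.2 (by omega), m - 1, rfl⟩
        · exact hs1 x hx'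
      · intro x hx
        rcases Finset.mem_insert.1 hx with rfl | hx'
        · exact le_refl _
        · exact le_trans (hs2 x hx') (le_of_lt hlt')
      · rw [Finset.sum_insert hnotmem, hs3]
        have hadd : Nat.fib (m - 2) + Nat.fib (m - 1) = Nat.fib m := by
          have := @Nat.fib_add_two (m - 2)
          have e1 : m - 2 + 2 = m := by omega
          have e2 : m - 2 + 1 = m - 1 := by omega
          rw [e1, e2] at this
          omega
        have hf2pos : 0 < Nat.fib (m - 2) := Nat.fib_pos.2 (by omega)
        omega

theorem R_fib_sub_one (m : ℕ) (hm : 2 ≤ m) : R (Nat.fib m - 1) = 1 := by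
  rw [R, Nat.card_eq_one_iff_unique]
  constructor
  · constructor
    intro ⟨s, hs1, hs2⟩ ⟨t, ht1, ht2⟩
    exact Subtype.ext (uniq m hm s t hs1 hs2 ht1 ht2)
  · obtain ⟨s, h1, _, h3⟩ := exist m hm
    exact ⟨⟨s, h1, h3⟩⟩
end

section
/- For every integer n ≥ 0, R(n) ≤ √(n+1). -/
open Finset

/-- The set of Fibonacci values `{F_2, ..., F_j} = {1,2,3,5,...}`. -/
def Fv (j : ℕ) : Finset ℕ := (Finset.Icc 2 j).image Nat.fib

/-- Total sum of `Fv j`. -/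
def Sv (j : ℕ) : ℕ := ∑ x ∈ Fv j, x

/-- Number of subsets of `Fv j` with sum `m`. -/
def cnt (m j : ℕ) : ℕ := ((Fv j).powerset.filter (fun s => ∑ x ∈ s, x = m)).card

lemma fib_notmem (j : ℕ) : Nat.fib (j+1) ∉ Fv j := by
  unfold Fv
  simp only [Finset.mem_image, Finset.mem_Icc, not_exists]
  rintro i ⟨⟨hi2, hij⟩, hfib⟩
  have h1 : Nat.fib i ≤ Nat.fib j := Nat.fib_mono hij
  have h2 : Nat.fib j < Nat.fib (j+1) := Nat.fib_lt_fib_succ (by omega)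
  omega

lemma Fv_succ (j : ℕ) (hj : 1 ≤ j) : Fv (j+1) = insert (Nat.fib (j+1)) (Fv j) := by
  unfold Fv
  have h : Finset.Icc 2 (j+1) = insert (j+1) (Finset.Icc 2 j) := by
    ext x; simp only [Finset.mem_Icc, Finset.mem_insert]; omega
  rw [h, Finset.image_insert]

lemma Sv_succ (j : ℕ) (hj : 1 ≤ j) : Sv (j+1) = Nat.fib (j+1) + Sv j := by
  unfold Sv
  rw [Fv_succ j hj, Finset.sum_insert (fib_notmem j)]

lemma Sv_fib : ∀ j, 1 ≤ j → Sv j + 2 = Nat.fib (j+2) := by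
  intro j
  induction j with
  | zero => omega
  | succ j ih =>
    intro _
    rcases Nat.eq_zero_or_pos j with hj | hj
    · subst hj; decide
    · rw [Sv_succ j hj]
      have h2 : Nat.fib (j+1+2) = Nat.fib (j+1) + Nat.fib (j+1+1) := Nat.fib_add_two
      have h3 : Nat.fib (j+1+1) = Nat.fib (j+2) := rfl
      have h4 : Nat.fib (j+1+2) = Nat.fib (j+3) := rfl
      have := ih hj
      omega

lemma cnt_zero (m j : ℕ) (h : Sv j < m) : cnt m j = 0 := by
  unfold cnt
  rw [Finset.card_eq_zero, Finset.filter_eq_empty_iff]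
  intro s hs
  rw [Finset.mem_powerset] at hs
  have hle : ∑ x ∈ s, x ≤ ∑ x ∈ Fv j, x :=
    Finset.sum_le_sum_of_subset hs
  have hSv : Sv j = ∑ x ∈ Fv j, x := rfl
  omega

lemma cnt_symm (m j : ℕ) (hm : m ≤ Sv j) : cnt m j = cnt (Sv j - m) j := by
  unfold cnt
  apply Finset.card_nbij' (fun s => Fv j \ s) (fun s => Fv j \ s)
  · intro s hs
    simp only [Finset.mem_coe, Finset.mem_filter, Finset.mem_powerset] at hs ⊢
    obtain ⟨hsub, hsum⟩ := hs
    refine ⟨Finset.sdiff_subset, ?_⟩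
    have hsd : ∑ x ∈ Fv j \ s, x + ∑ x ∈ s, x = ∑ x ∈ Fv j, x :=
      Finset.sum_sdiff hsub
    have hSv : Sv j = ∑ x ∈ Fv j, x := rfl
    omega
  · intro s hs
    simp only [Finset.mem_coe, Finset.mem_filter, Finset.mem_powerset] at hs ⊢
    obtain ⟨hsub, hsum⟩ := hs
    refine ⟨Finset.sdiff_subset, ?_⟩
    have hsd : ∑ x ∈ Fv j \ s, x + ∑ x ∈ s, x = ∑ x ∈ Fv j, x :=
      Finset.sum_sdiff hsub
    have hSv : Sv j = ∑ x ∈ Fv j, x := rfl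
    omega
  · intro s hs
    simp only [Finset.mem_coe, Finset.mem_filter, Finset.mem_powerset] at hs
    exact Finset.sdiff_sdiff_eq_self hs.1
  · intro s hs
    simp only [Finset.mem_coe, Finset.mem_filter, Finset.mem_powerset] at hs
    exact Finset.sdiff_sdiff_eq_self hs.1

lemma cnt_rec (m j : ℕ) (hj : 1 ≤ j) :
    cnt m (j+1) = cnt m j +
      (if Nat.fib (j+1) ≤ m then cnt (m - Nat.fib (j+1)) j else 0) := by
  have hnm := fib_notmem j
  unfold cnt
  rw [Fv_succ j hj, Finset.powerset_insert, Finset.filter_union]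
  rw [Finset.card_union_of_disjoint]
  · congr 1
    rw [Finset.filter_image]
    have hcard : ((Fv j).powerset.filter
        (fun a => ∑ x ∈ insert (Nat.fib (j+1)) a, x = m)).card =
        ((Fv j).powerset.filter
        (fun a => Nat.fib (j+1) + ∑ x ∈ a, x = m)).card := by
      congr 1
      apply Finset.filter_congr
      intro s hs
      rw [Finset.mem_powerset] at hs
      have hns : Nat.fib (j+1) ∉ s := fun h => hnm (hs h)
      rw [Finset.sum_insert hns]
    rw [Finset.card_image_of_injOn, hcard]
    · by_cases ham : Nat.fib (j+1) ≤ m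
      · rw [if_pos ham]
        congr 1
        apply Finset.filter_congr
        intro s _
        omega
      · rw [if_neg ham]
        rw [Finset.card_eq_zero, Finset.filter_eq_empty_iff]
        intro s _
        omega
    · intro s1 hs1 s2 hs2 heq
      simp only [Finset.coe_filter, Set.mem_setOf_eq, Finset.mem_powerset] at hs1 hs2
      have h1 : Nat.fib (j+1) ∉ s1 := fun h => hnm (hs1.1 h)
      have h2 : Nat.fib (j+1) ∉ s2 := fun h => hnm (hs2.1 h)
      have := congrArg (fun t => Finset.erase t (Nat.fib (j+1))) heq
      simpa [Finset.erase_insert h1, Finset.erase_insert h2] using this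
  · rw [Finset.disjoint_left]
    intro s hs1 hs2
    simp only [Finset.mem_filter, Finset.mem_powerset, Finset.mem_image] at hs1 hs2
    obtain ⟨⟨s', hs', rfl⟩, _⟩ := hs2
    exact hnm (hs1.1 (Finset.mem_insert_self _ _))

/-- Cassini-type identity over the integers. -/
lemma cassini : ∀ k : ℕ,
    ((Nat.fib (k+1) : ℤ))^2 - (Nat.fib (k+1) : ℤ) * (Nat.fib k : ℤ)
      - (Nat.fib k : ℤ)^2 = (-1)^k := by
  intro k
  induction k with
  | zero => simp
  | succ k ih =>
    rw [pow_succ]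
    have hz : (Nat.fib (k+1+1) : ℤ) = (Nat.fib k : ℤ) + (Nat.fib (k+1) : ℤ) := by
      exact_mod_cast Nat.fib_add_two
    linear_combination (-1 : ℤ) * ih +
      ((Nat.fib (k+1+1) : ℤ) + (Nat.fib k : ℤ)) * hz

/-- Key quadratic inequality, valid for all integers `B` thanks to Cassini + integrality. -/
lemma quad (k : ℕ) (B : ℤ) :
    4*B*((Nat.fib (k+1) : ℤ) - B) ≤ (B + (Nat.fib k : ℤ))^2 := by
  have hc := cassini k
  set F : ℤ := (Nat.fib k : ℤ) with hF
  set F1 : ℤ := (Nat.fib (k+1) : ℤ) with hF1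
  set v : ℤ := 5*B^2 - 2*B*(2*F1 - F) + F^2 with hv
  have hgoal : (B + F)^2 - 4*B*(F1 - B) = v := by rw [hv]; ring
  have hvge : 0 ≤ v := by
    by_contra hneg
    push_neg at hneg
    have h1 : v ≤ -1 := by omega
    have h2 : (5*B - (2*F1 - F))^2 = 5*v + ((2*F1-F)^2 - 5*F^2) := by
      rw [hv]; ring
    have h3 : (2*F1-F)^2 - 5*F^2 = 4 * (-1:ℤ)^k := by linear_combination 4*hc
    have h4 : (4:ℤ) * (-1)^k ≤ 4 := by
      rcases Nat.even_or_odd k with he | ho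
      · rw [he.neg_one_pow]; norm_num
      · rw [ho.neg_one_pow]; norm_num
    nlinarith [sq_nonneg (5*B - (2*F1 - F))]
  linarith

/-- The induction step for `2*m ≤ Sv (j+1)`. -/
lemma half (j : ℕ) (hj : 1 ≤ j)
    (ih : ∀ m ≤ Sv j, cnt m j ^ 2 ≤ min m (Sv j - m) + 1)
    (m : ℕ) (hm : 2*m ≤ Sv (j+1)) : cnt m (j+1) ^ 2 ≤ m + 1 := by
  have hSv : Sv (j+1) = Nat.fib (j+1) + Sv j := Sv_succ j hj
  rw [cnt_rec m j hj]
  by_cases hfm : Nat.fib (j+1) ≤ m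
  · rw [if_pos hfm]
    have hm' : m - Nat.fib (j+1) ≤ Sv j := by omega
    have hb : cnt (m - Nat.fib (j+1)) j ^ 2 ≤ (m - Nat.fib (j+1)) + 1 :=
      le_trans (ih _ hm') (Nat.add_le_add_right (Nat.min_le_left _ _) 1)
    by_cases hms : m ≤ Sv j
    · have ha : cnt m j ^ 2 ≤ (Sv j - m) + 1 :=
        le_trans (ih m hms) (Nat.add_le_add_right (Nat.min_le_right _ _) 1)
      obtain ⟨k, rfl⟩ : ∃ k, j = k + 1 := ⟨j - 1, by omega⟩
      set a := cnt m (k+1) with hadef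
      set b := cnt (m - Nat.fib (k+2)) (k+1) with hbdef
      -- move to ℤ
      have hfj : (Nat.fib (k+2) : ℤ) ≤ (m : ℤ) := by exact_mod_cast hfm
      have hA : (a : ℤ)^2 ≤ (Sv (k+1) : ℤ) - m + 1 := by
        have := ha; zify [hms] at this; exact this
      have hB : (b : ℤ)^2 ≤ (m : ℤ) - Nat.fib (k+2) + 1 := by
        have := hb; zify [hfm] at this; exact this
      have hSfibN := Sv_fib (k+1) (by omega)
      have hSfib : (Sv (k+1) : ℤ) = (Nat.fib (k+3) : ℤ) - 2 := by
        push_cast [← hSfibN]; ring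
      have hfib3 : (Nat.fib (k+3) : ℤ) = (Nat.fib (k+1) : ℤ) + (Nat.fib (k+2) : ℤ) := by
        exact_mod_cast Nat.fib_add_two
      have hfib2 : (Nat.fib (k+2) : ℤ) = (Nat.fib k : ℤ) + (Nat.fib (k+1) : ℤ) := by
        exact_mod_cast Nat.fib_add_two
      have hmono : (Nat.fib (k+1) : ℤ) ≤ (Nat.fib (k+2) : ℤ) := by
        exact_mod_cast Nat.fib_mono (by omega)
      have ha0 : (0:ℤ) ≤ (a:ℤ) := Int.natCast_nonneg a
      have hb0 : (0:ℤ) ≤ (b:ℤ) := Int.natCast_nonneg b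
      have hA0 : (0:ℤ) ≤ (Sv (k+1) : ℤ) - m + 1 := le_trans (sq_nonneg _) hA
      have hB0 : (0:ℤ) ≤ (m : ℤ) - Nat.fib (k+2) + 1 := le_trans (sq_nonneg _) hB
      have hprod : (a:ℤ)^2 * (b:ℤ)^2 ≤
          ((Sv (k+1) : ℤ) - m + 1) * ((m : ℤ) - Nat.fib (k+2) + 1) :=
        mul_le_mul hA hB (sq_nonneg _) hA0
      -- the quadratic bound: 4AB ≤ D² with D = m+1-F_{k+1}
      have hq := quad k ((m:ℤ) - Nat.fib (k+2) + 1)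
      have hAeq : (Sv (k+1) : ℤ) - m + 1 =
          (Nat.fib (k+1) : ℤ) - ((m:ℤ) - Nat.fib (k+2) + 1) := by
        rw [hSfib]; linarith [hfib3]
      have hDeq : ((m:ℤ) - Nat.fib (k+2) + 1) + (Nat.fib k : ℤ) =
          (m:ℤ) + 1 - Nat.fib (k+1) := by linarith [hfib2]
      have hq' : 4 * (((Sv (k+1) : ℤ) - m + 1) * ((m : ℤ) - Nat.fib (k+2) + 1)) ≤
          ((m:ℤ) + 1 - Nat.fib (k+1))^2 := by
        rw [hAeq, ← hDeq]
        nlinarith [hq]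
      have hD0 : (0:ℤ) ≤ (m:ℤ) + 1 - Nat.fib (k+1) := by linarith
      have hsq : (2*(a:ℤ)*(b:ℤ))^2 ≤ ((m:ℤ) + 1 - Nat.fib (k+1))^2 := by
        have hexp : (2*(a:ℤ)*(b:ℤ))^2 = 4 * ((a:ℤ)^2 * (b:ℤ)^2) := by ring
        rw [hexp]
        calc 4 * ((a:ℤ)^2 * (b:ℤ)^2)
            ≤ 4 * (((Sv (k+1) : ℤ) - m + 1) * ((m : ℤ) - Nat.fib (k+2) + 1)) := by
              linarith [hprod]
          _ ≤ ((m:ℤ) + 1 - Nat.fib (k+1))^2 := hq'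
      have h2ab : 2*(a:ℤ)*(b:ℤ) ≤ (m:ℤ) + 1 - Nat.fib (k+1) :=
        (abs_le_of_sq_le_sq' hsq hD0).2
      have hABsum : ((Sv (k+1) : ℤ) - m + 1) + ((m : ℤ) - Nat.fib (k+2) + 1) =
          (Nat.fib (k+1) : ℤ) := by rw [hSfib]; linarith [hfib3]
      have hfin : ((a:ℤ) + (b:ℤ))^2 ≤ (m:ℤ) + 1 := by
        have hexp : ((a:ℤ) + (b:ℤ))^2 = (a:ℤ)^2 + (b:ℤ)^2 + 2*(a:ℤ)*(b:ℤ) := by ring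
        rw [hexp]
        linarith [hA, hB, h2ab, hABsum]
      exact_mod_cast hfin
    · rw [cnt_zero m j (by omega), zero_add]
      exact le_trans hb (by omega)
  · rw [if_neg hfm, add_zero]
    by_cases hms : m ≤ Sv j
    · exact le_trans (ih m hms) (Nat.add_le_add_right (Nat.min_le_left _ _) 1)
    · rw [cnt_zero m j (by omega)]
      simp

lemma Fv_eq_empty (j : ℕ) (h : j ≤ 1) : Fv j = ∅ := by
  unfold Fv
  rw [Finset.Icc_eq_empty (by omega), Finset.image_empty]

lemma Sv_eq_zero (j : ℕ) (h : j ≤ 1) : Sv j = 0 := by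
  unfold Sv
  rw [Fv_eq_empty j h, Finset.sum_empty]

lemma cnt_triv (j : ℕ) (h : j ≤ 1) : cnt 0 j = 1 := by
  unfold cnt
  rw [Fv_eq_empty j h, Finset.powerset_empty, Finset.filter_singleton]
  simp

lemma key : ∀ j, ∀ m, m ≤ Sv j → cnt m j ^ 2 ≤ min m (Sv j - m) + 1 := by
  intro j
  induction j with
  | zero =>
    intro m hm
    have h0 : Sv 0 = 0 := Sv_eq_zero 0 (by omega)
    have hm0 : m = 0 := by omega
    subst hm0
    have : cnt 0 0 = 1 := cnt_triv 0 (by omega)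
    simp [this, h0]
  | succ j ih =>
    intro m hm
    rcases Nat.eq_zero_or_pos j with hj | hj
    · subst hj
      have h0 : Sv (0+1) = 0 := Sv_eq_zero 1 (by omega)
      have hm0 : m = 0 := by omega
      subst hm0
      have : cnt 0 1 = 1 := cnt_triv 1 (by omega)
      simp [this, h0]
    · by_cases h2 : 2*m ≤ Sv (j+1)
      · have hmin : min m (Sv (j+1) - m) = m := by omega
        rw [hmin]
        exact half j hj ih m h2
      · have hsym := cnt_symm m (j+1) hm
        rw [hsym]
        have h2' : 2*(Sv (j+1) - m) ≤ Sv (j+1) := by omega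
        have hmin : min m (Sv (j+1) - m) = Sv (j+1) - m := by omega
        rw [hmin]
        exact half j hj ih _ h2'

lemma fib_ge : ∀ n : ℕ, n + 1 ≤ Nat.fib (n + 2) := by
  intro n
  induction n with
  | zero => decide
  | succ n ih =>
    have h : Nat.fib (n+1+2) = Nat.fib (n+1) + Nat.fib (n+1+1) := Nat.fib_add_two
    have hr : Nat.fib (n+1+1) = Nat.fib (n+2) := rfl
    have hpos : 0 < Nat.fib (n + 1) := Nat.fib_pos.mpr (by omega)
    omega

lemma R_eq_cnt (n j : ℕ) (hj : 2 ≤ j) (hn : n ≤ Nat.fib j) : R n = cnt n j := by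
  have hiff : ∀ s : Finset ℕ,
      ((∀ x ∈ s, 0 < x ∧ ∃ m, Nat.fib m = x) ∧ ∑ x ∈ s, x = n) ↔
      s ∈ (Fv j).powerset.filter (fun s => ∑ x ∈ s, x = n) := by
    intro s
    simp only [Finset.mem_filter, Finset.mem_powerset]
    constructor
    · rintro ⟨hP, hsum⟩
      refine ⟨?_, hsum⟩
      intro x hx
      obtain ⟨hpos, m, hm⟩ := hP x hx
      have hxn : x ≤ n := by
        have hxle : x ≤ ∑ y ∈ s, y :=
          Finset.single_le_sum (f := fun y : ℕ => y) (fun i _ => Nat.zero_le i) hx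
        omega
      have hxfj : x ≤ Nat.fib j := le_trans hxn hn
      unfold Fv
      rw [Finset.mem_image]
      rcases m with _ | _ | m
      · simp only [Nat.fib_zero] at hm; omega
      · refine ⟨2, Finset.mem_Icc.mpr ⟨le_refl 2, hj⟩, ?_⟩
        rw [← hm]
        decide
      · by_cases hmj : m + 2 ≤ j
        · exact ⟨m+2, Finset.mem_Icc.mpr ⟨by omega, hmj⟩, hm⟩
        · have hmono : Nat.fib j ≤ Nat.fib (m+2) := Nat.fib_mono (by omega)
          have hnorm : Nat.fib (m+1+1) = Nat.fib (m+2) := rfl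
          have hxeq : x = Nat.fib j := by omega
          exact ⟨j, Finset.mem_Icc.mpr ⟨hj, le_refl j⟩, hxeq.symm⟩
    · rintro ⟨hsub, hsum⟩
      refine ⟨?_, hsum⟩
      intro x hx
      have hmem := hsub hx
      unfold Fv at hmem
      rw [Finset.mem_image] at hmem
      obtain ⟨i, hi, rfl⟩ := hmem
      rw [Finset.mem_Icc] at hi
      exact ⟨Nat.fib_pos.mpr (by omega), i, rfl⟩
  rw [R, cnt]
  rw [Nat.card_congr (Equiv.subtypeEquivRight hiff)]
  exact Nat.card_eq_finsetCard _

theorem R_le_sqrt (n : ℕ) : (R n : ℝ) ≤ Real.sqrt (n + 1) := by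
  have hfj : n ≤ Nat.fib (n+2) := by have := fib_ge n; omega
  have hR : R n = cnt n (n+2) := R_eq_cnt n (n+2) (by omega) hfj
  have hnS : n ≤ Sv (n+2) := by
    have h1 := Sv_fib (n+2) (by omega)
    have h2 := fib_ge (n+2)
    omega
  have hkey := key (n+2) n hnS
  have hsq : (R n)^2 ≤ n + 1 := by
    rw [hR]
    exact le_trans hkey (Nat.add_le_add_right (Nat.min_le_left _ _) 1)
  have hreal : ((R n : ℝ))^2 ≤ (n : ℝ) + 1 := by exact_mod_cast hsq
  calc (R n : ℝ) = Real.sqrt ((R n : ℝ)^2) := (Real.sqrt_sq (by positivity)).symm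
    _ ≤ Real.sqrt ((n:ℝ) + 1) := Real.sqrt_le_sqrt hreal
end

section
/- For every integer n ≥ 2, R(F_n) = ⌊n/2⌋. -/
def IsRep (s : Finset ℕ) (n : ℕ) : Prop :=
  (∀ x ∈ s, 0 < x ∧ ∃ m, Nat.fib m = x) ∧ ∑ x ∈ s, x = n

lemma mem_le_sum' {s : Finset ℕ} {n : ℕ} (h : IsRep s n) {x : ℕ} (hx : x ∈ s) : x ≤ n := by
  rw [← h.2]
  exact Finset.single_le_sum (fun i _ => Nat.zero_le i) hx

instance rep_finite (n : ℕ) : Finite {s : Finset ℕ // IsRep s n} := by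
  have : Function.Injective (fun s : {s : Finset ℕ // IsRep s n} =>
      (⟨s.1, by
        simp only [Finset.mem_powerset]
        intro x hx
        have := mem_le_sum' s.2 hx
        simp only [Finset.mem_range]; omega⟩ :
        ((Finset.range (n+1)).powerset : Finset (Finset ℕ)))) := by
    intro a b hab
    exact Subtype.ext (by simpa using congrArg Subtype.val hab)
  exact Finite.of_injective _ this

lemma fib_value_le {x m : ℕ} (hx : ∃ j, Nat.fib j = x) (h : x < Nat.fib (m + 1)) :
    x ≤ Nat.fib m := by
  obtain ⟨j, rfl⟩ := hx
  by_cases hj : j ≤ m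
  · exact Nat.fib_mono hj
  · exact absurd (Nat.fib_mono (by omega : m + 1 ≤ j)) (by omega)

lemma sum_rep_le {s : Finset ℕ} {k : ℕ} (hk : 2 ≤ k)
    (hfib : ∀ x ∈ s, 0 < x ∧ ∃ m, Nat.fib m = x)
    (hle : ∀ x ∈ s, x ≤ Nat.fib k) : ∑ x ∈ s, x ≤ Nat.fib (k + 2) - 2 := by
  have hsub : s ⊆ Finset.image Nat.fib (Finset.Icc 2 k) := by
    intro x hx
    obtain ⟨hpos, j, hj⟩ := hfib x hx
    simp only [Finset.mem_image, Finset.mem_Icc]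
    have hj1 : 1 ≤ j := by
      rcases Nat.eq_zero_or_pos j with h | h
      · subst h; simp [Nat.fib_zero] at hj; omega
      · exact h
    rcases Nat.lt_or_ge j 2 with h2 | h2
    · exact ⟨2, by omega, by interval_cases j <;> simpa using hj⟩
    · by_cases hjk : j ≤ k
      · exact ⟨j, ⟨h2, hjk⟩, hj⟩
      · have h1 : Nat.fib k ≤ Nat.fib j := Nat.fib_mono (by omega)
        have h2' : x ≤ Nat.fib k := hle x hx
        exact ⟨k, ⟨hk, le_rfl⟩, by omega⟩
  have hinj : Set.InjOn Nat.fib (Finset.Icc 2 k) := by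
    intro i hi j hj hij
    simp only [Finset.coe_Icc, Set.mem_Icc] at hi hj
    by_contra hne
    rcases Nat.lt_or_ge i j with h | h
    · exact absurd hij (Nat.ne_of_lt ((Nat.fib_lt_fib hi.1).mpr h))
    · exact absurd hij.symm (Nat.ne_of_lt ((Nat.fib_lt_fib hj.1).mpr (by omega)))
  have himg : ∑ x ∈ Finset.image Nat.fib (Finset.Icc 2 k), x = ∑ j ∈ Finset.Icc 2 k, Nat.fib j :=
    Finset.sum_image (fun i hi j hj => hinj hi hj)
  have hicc : ∑ j ∈ Finset.Icc 2 k, Nat.fib j = (∑ j ∈ Finset.range (k + 1), Nat.fib j) - 1 := by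
    have : Finset.range (k + 1) = insert 0 (insert 1 (Finset.Icc 2 k)) := by
      ext j; simp only [Finset.mem_range, Finset.mem_insert, Finset.mem_Icc]; omega
    rw [this, Finset.sum_insert (by simp), Finset.sum_insert (by simp)]
    simp
  have hfs := Nat.fib_succ_eq_succ_sum (k + 1)
  rw [show k + 1 + 1 = k + 2 by omega] at hfs
  calc ∑ x ∈ s, x ≤ ∑ x ∈ Finset.image Nat.fib (Finset.Icc 2 k), x :=
        Finset.sum_le_sum_of_subset hsub
    _ = ∑ j ∈ Finset.Icc 2 k, Nat.fib j := himg
    _ = Nat.fib (k + 2) - 2 := by rw [hicc]; omega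

lemma rep_dichotomy {m : ℕ} (hm : 4 ≤ m) {s : Finset ℕ} (hs : IsRep s (Nat.fib m)) :
    s = {Nat.fib m} ∨ (Nat.fib (m - 1) ∈ s ∧ IsRep (s.erase (Nat.fib (m - 1))) (Nat.fib (m - 2))) := by
  obtain ⟨hfib, hsum⟩ := hs
  have hfm : 3 ≤ Nat.fib m := by
    calc 3 = Nat.fib 4 := by norm_num
    _ ≤ Nat.fib m := Nat.fib_mono hm
  -- some element is ≥ fib (m-1)
  have hex : ∃ x ∈ s, Nat.fib (m - 1) ≤ x := by
    by_contra hcon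
    push_neg at hcon
    have hall : ∀ x ∈ s, x ≤ Nat.fib (m - 2) := by
      intro x hx
      have : x < Nat.fib (m - 2 + 1) := by
        have := hcon x hx; rw [show m - 2 + 1 = m - 1 by omega]; exact this
      exact fib_value_le (hfib x hx).2 this
    have := sum_rep_le (by omega : 2 ≤ m - 2) hfib hall
    rw [hsum] at this
    have : Nat.fib (m - 2 + 2) = Nat.fib m := by congr 1; omega
    omega
  obtain ⟨x, hxs, hxge⟩ := hex
  have hxle : x ≤ Nat.fib m := mem_le_sum' ⟨hfib, hsum⟩ hxs
  by_cases hxm : x = Nat.fib m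
  · left
    have herase : ∑ y ∈ s.erase x, y = 0 := by
      have h := Finset.add_sum_erase s id hxs
      simp only [id_eq] at h
      omega
    have hemp : s.erase x = ∅ := by
      by_contra hne
      obtain ⟨y, hy⟩ := Finset.nonempty_iff_ne_empty.mpr hne
      have hpos := (hfib y (Finset.mem_of_mem_erase hy)).1
      have : y ≤ ∑ y ∈ s.erase x, y :=
        Finset.single_le_sum (fun i _ => Nat.zero_le i) hy
      omega
    have h2 := Finset.insert_erase hxs
    rw [hemp] at h2
    rw [← h2, hxm]
    rfl
  · right
    have hxlt : x < Nat.fib m := lt_of_le_of_ne hxle hxm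
    have hxle' : x ≤ Nat.fib (m - 1) := by
      apply fib_value_le (hfib x hxs).2
      convert hxlt using 2; omega
    have hxeq : x = Nat.fib (m - 1) := le_antisymm hxle' hxge
    subst hxeq
    refine ⟨hxs, fun y hy => hfib y (Finset.mem_of_mem_erase hy), ?_⟩
    have h := Finset.add_sum_erase s id hxs
    simp only [id_eq] at h
    have hadd : Nat.fib (m - 2) + Nat.fib (m - 1) = Nat.fib m := by
      have h2 := Nat.fib_add_two (n := m - 2)
      rw [show m - 2 + 2 = m by omega, show m - 2 + 1 = m - 1 by omega] at h2
      omega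
    omega

lemma fib_pred_lt {m : ℕ} (hm : 4 ≤ m) : Nat.fib (m - 2) < Nat.fib (m - 1) := by
  have := Nat.fib_lt_fib_succ (n := m - 2) (by omega)
  convert this using 2; omega

lemma fib_pred_lt' {m : ℕ} (hm : 4 ≤ m) : Nat.fib (m - 1) < Nat.fib m := by
  have := Nat.fib_lt_fib_succ (n := m - 1) (by omega)
  convert this using 2; omega

lemma insert_rep {m : ℕ} (hm : 4 ≤ m) {t : Finset ℕ} (ht : IsRep t (Nat.fib (m - 2))) :
    Nat.fib (m - 1) ∉ t ∧ IsRep (insert (Nat.fib (m - 1)) t) (Nat.fib m) := by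
  have hnot : Nat.fib (m - 1) ∉ t := by
    intro hmem
    have := mem_le_sum' ht hmem
    have := fib_pred_lt hm
    omega
  refine ⟨hnot, ?_, ?_⟩
  · intro x hx
    rcases Finset.mem_insert.mp hx with h | h
    · subst h
      refine ⟨?_, m - 1, rfl⟩
      have h : Nat.fib 2 ≤ Nat.fib (m - 1) := Nat.fib_mono (by omega)
      simp [Nat.fib_two] at h
      omega
    · exact ht.1 x h
  · rw [Finset.sum_insert hnot, ht.2]
    have h2 := Nat.fib_add_two (n := m - 2)
    rw [show m - 2 + 2 = m by omega, show m - 2 + 1 = m - 1 by omega] at h2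
    omega

noncomputable def repEquiv (m : ℕ) (hm : 4 ≤ m) :
    {s : Finset ℕ // IsRep s (Nat.fib m)} ≃ Option {t : Finset ℕ // IsRep t (Nat.fib (m - 2))} where
  toFun s := if h : s.1 = {Nat.fib m} then none else
    some ⟨s.1.erase (Nat.fib (m - 1)), ((rep_dichotomy hm s.2).resolve_left h).2⟩
  invFun o := o.elim ⟨{Nat.fib m}, fun x hx => by
      simp only [Finset.mem_singleton] at hx
      subst hx
      exact ⟨by have h : Nat.fib 2 ≤ Nat.fib m := Nat.fib_mono (by omega); simp [Nat.fib_two] at h; omega, m, rfl⟩,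
      by simp⟩
    (fun t => ⟨insert (Nat.fib (m - 1)) t.1, (insert_rep hm t.2).2⟩)
  left_inv s := by
    by_cases h : s.1 = {Nat.fib m}
    · simp only [h, dif_pos]
      exact Subtype.ext h.symm
    · simp only [h, dif_neg, not_false_iff, Option.elim]
      apply Subtype.ext
      exact Finset.insert_erase ((rep_dichotomy hm s.2).resolve_left h).1
  right_inv o := by
    match o with
    | none => simp
    | some t =>
      have hnot := (insert_rep hm t.2).1
      have hne : insert (Nat.fib (m - 1)) t.1 ≠ {Nat.fib m} := by
        intro heq
        have hmem : Nat.fib (m - 1) ∈ ({Nat.fib m} : Finset ℕ) := heq ▸ Finset.mem_insert_self _ _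
        simp only [Finset.mem_singleton] at hmem
        have := fib_pred_lt' hm
        omega
      simp only [Option.elim, hne, dif_neg, not_false_iff]
      refine (dif_neg hne).trans ?_
      congr 1
      exact Subtype.ext (Finset.erase_insert hnot)

lemma card_one (n : ℕ) (hn : n = 1 ∨ n = 2) :
    Nat.card {s : Finset ℕ // IsRep s n} = 1 := by
  rw [Nat.card_eq_one_iff_exists]
  rcases hn with rfl | rfl
  · refine ⟨⟨{1}, fun x hx => by simp at hx; subst hx; exact ⟨one_pos, 1, rfl⟩, by simp⟩, ?_⟩
    rintro ⟨s, hfib, hsum⟩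
    apply Subtype.ext
    simp only
    have hsub : s ⊆ {1} := by
      intro x hx
      have h1 := mem_le_sum' ⟨hfib, hsum⟩ hx
      have h2 := (hfib x hx).1
      simp only [Finset.mem_singleton]; omega
    have hne : s.Nonempty := by
      by_contra h
      rw [Finset.not_nonempty_iff_eq_empty] at h
      simp [h] at hsum
    rcases Finset.subset_singleton_iff.mp hsub with h | h
    · exact absurd h (Finset.nonempty_iff_ne_empty.mp hne)
    · exact h
  · refine ⟨⟨{2}, fun x hx => by simp at hx; subst hx; exact ⟨by norm_num, 3, rfl⟩, by simp⟩, ?_⟩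
    rintro ⟨s, hfib, hsum⟩
    apply Subtype.ext
    simp only
    by_cases h2 : 2 ∈ s
    · have herase : ∑ y ∈ s.erase 2, y = 0 := by
        have := Finset.add_sum_erase s id h2
        simp only [id_eq] at this
        omega
      have hemp : s.erase 2 = ∅ := by
        by_contra hne
        obtain ⟨y, hy⟩ := Finset.nonempty_iff_ne_empty.mpr hne
        have hpos := (hfib y (Finset.mem_of_mem_erase hy)).1
        have : y ≤ ∑ y ∈ s.erase 2, y :=
          Finset.single_le_sum (fun i _ => Nat.zero_le i) hy
        omega
      have := Finset.insert_erase h2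
      rw [hemp] at this
      simp [← this]
    · exfalso
      have hsub : s ⊆ {1} := by
        intro x hx
        have h1 := mem_le_sum' ⟨hfib, hsum⟩ hx
        have h2' := (hfib x hx).1
        simp only [Finset.mem_singleton]
        rcases (by omega : x = 1 ∨ x = 2) with h | h
        · exact h
        · exact absurd (h ▸ hx) h2
      have := Finset.sum_le_sum_of_subset hsub (f := id)
      simp only [id_eq] at this
      rw [hsum] at this
      simp at this

lemma key_s5 : ∀ n, 2 ≤ n → Nat.card {s : Finset ℕ // IsRep s (Nat.fib n)} = n / 2 := by
  intro n
  induction n using Nat.strong_induction_on with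
  | _ n ih =>
    intro hn
    rcases (by omega : n = 2 ∨ n = 3 ∨ 4 ≤ n) with rfl | rfl | h4
    · rw [show Nat.fib 2 = 1 by norm_num]
      exact card_one 1 (Or.inl rfl)
    · rw [show Nat.fib 3 = 2 by norm_num]
      exact card_one 2 (Or.inr rfl)
    · rw [Nat.card_congr (repEquiv n h4), Finite.card_option,
        ih (n - 2) (by omega) (by omega)]
      omega

theorem R_fib (n : ℕ) (hn : 2 ≤ n) : R (Nat.fib n) = n / 2 := key_s5 n hn
end

section
/- Every root of x^5 − 2x^4 − 3x^3 + 4x^2 + 2x − 2 other than the greatest root λ₁ of x^3 − 2x^2 − 2x + 2 has absolute value strictly less than λ₁; i.e., λ₁ is the unique dominant root of the quintic. -/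
theorem dominant_root (l : ℝ)
    (hroot : l ^ 3 - 2 * l ^ 2 - 2 * l + 2 = 0)
    (hmax : ∀ x : ℝ, x ^ 3 - 2 * x ^ 2 - 2 * x + 2 = 0 → x ≤ l) :
    ∀ z : ℂ, z ^ 5 - 2 * z ^ 4 - 3 * z ^ 3 + 4 * z ^ 2 + 2 * z - 2 = 0 →
      z ≠ (l : ℂ) → ‖z‖ < l := by
  -- first, l > 2
  have hcont : Continuous fun x : ℝ => x ^ 3 - 2 * x ^ 2 - 2 * x + 2 := by continuity
  obtain ⟨r, hr, hfr⟩ : ∃ r ∈ Set.Icc (2:ℝ) 3, r ^ 3 - 2 * r ^ 2 - 2 * r + 2 = 0 := by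
    have h := intermediate_value_Icc (by norm_num : (2:ℝ) ≤ 3) hcont.continuousOn
    have h0 : (0:ℝ) ∈ Set.Icc ((2:ℝ) ^ 3 - 2 * 2 ^ 2 - 2 * 2 + 2)
        ((3:ℝ) ^ 3 - 2 * 3 ^ 2 - 2 * 3 + 2) := by norm_num
    obtain ⟨r, hr, hr0⟩ := h h0
    exact ⟨r, hr, hr0⟩
  have hl2 : 2 < l := by
    have h1 : (2:ℝ) ≤ l := le_trans hr.1 (hmax r hfr)
    rcases lt_or_eq_of_le h1 with h | h
    · exact h
    · exfalso; rw [← h] at hroot; norm_num at hroot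
  have hl0 : 0 < l := by linarith
  intro z hz hne
  have hrootC : (l:ℂ) ^ 3 - 2 * (l:ℂ) ^ 2 - 2 * (l:ℂ) + 2 = 0 := by
    exact_mod_cast congrArg (Complex.ofReal) hroot
  have hfac : (z ^ 2 - 1) * (z ^ 3 - 2 * z ^ 2 - 2 * z + 2) = 0 := by
    linear_combination hz
  rcases mul_eq_zero.1 hfac with h1 | hcub
  · -- z = ±1
    have : (z - 1) * (z + 1) = 0 := by linear_combination h1
    rcases mul_eq_zero.1 this with h | h
    · have hz1 : z = 1 := by linear_combination h
      rw [hz1]; simpa using hl2.trans_le' (by norm_num)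
    · have hz1 : z = -1 := by linear_combination h
      rw [hz1]; simpa using hl2.trans_le' (by norm_num)
  · -- cubic root
    have hquad : (z - (l:ℂ)) * (z ^ 2 + ((l:ℂ) - 2) * z + ((l:ℂ) ^ 2 - 2 * l - 2)) = 0 := by
      linear_combination hcub - hrootC
    have hq : z ^ 2 + ((l:ℂ) - 2) * z + ((l:ℂ) ^ 2 - 2 * l - 2) = 0 := by
      rcases mul_eq_zero.1 hquad with h | h
      · exact absurd (by linear_combination h) hne
      · exact h
    set a := z.re with ha
    set b := z.im with hb
    have hre : a ^ 2 - b ^ 2 + (l - 2) * a + (l ^ 2 - 2 * l - 2) = 0 := by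
      have := congrArg Complex.re hq
      simp [pow_two, Complex.add_re, Complex.mul_re, Complex.mul_im, Complex.sub_re,
        Complex.ofReal_re, Complex.ofReal_im, ← ha, ← hb] at this
      ring_nf at this ⊢
      linarith
    have him : b * (2 * a + l - 2) = 0 := by
      have := congrArg Complex.im hq
      simp [pow_two, Complex.add_im, Complex.mul_re, Complex.mul_im, Complex.sub_im,
        Complex.ofReal_re, Complex.ofReal_im, ← ha, ← hb] at this
      ring_nf at this ⊢
      linarith
    have hb0 : b = 0 := by
      by_contra hb0
      have h2a : 2 * a + l - 2 = 0 := by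
        rcases mul_eq_zero.1 him with h | h
        · exact absurd h hb0
        · exact h
      have hbsq : 0 < b ^ 2 := by positivity
      nlinarith [hre, hroot, hl2, mul_pos hl0 hbsq]
    have hza : z = (a:ℂ) := Complex.ext rfl (by simpa using hb0)
    -- a is a real root of the cubic
    have hacub : a ^ 3 - 2 * a ^ 2 - 2 * a + 2 = 0 := by
      have hre' : a ^ 2 + (l - 2) * a + (l ^ 2 - 2 * l - 2) = 0 := by
        rw [hb0] at hre; linarith [hre]
      linear_combination (a - l) * hre' + hroot
    have hal : a < l := by
      have h1 : a ≤ l := hmax a hacub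
      rcases lt_or_eq_of_le h1 with h | h
      · exact h
      · exact absurd (by rw [hza, h]) hne
    have han : -2 < a := by
      by_contra h
      push_neg at h
      nlinarith [hacub, sq_nonneg (a + 2), sq_nonneg a]
    rw [hza, Complex.norm_real, Real.norm_eq_abs]
    rw [abs_lt]
    constructor <;> linarith
end
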